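/- Let K be a field, F(y,z) ∈ K[y,z] a polynomial of total degree at most d, and B, C ⊆ K finite sets with |B| = |C| = m. If F(y_i, z_j) = 0 for at least 2dm pairs (y_i, z_j) ∈ B × C, then F is the zero polynomial. -/
import Mathlib


open MvPolynomial

/-- Vanishing Lemma: if a two-variable polynomial of total degree at most `d`
vanishes at `2*d*m` points of a grid `B × C` with `|B| = |C| = m`, it is zero. -/
theorem stmt_0 {K : Type*} [Field K] [DecidableEq K]
    (d m : ℕ) (hd : 0 < d) (hm : 0 < m)
    (F : MvPolynomial (Fin 2) K) (hdeg : F.totalDegree ≤ d)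
    (B C : Finset K) (hB : B.card = m) (hC : C.card = m)
    (hzeros : 2 * d * m ≤
      ((B ×ˢ C).filter fun p => MvPolynomial.eval ![p.1, p.2] F = 0).card) :
    F = 0 := by
  by_contra hF
  set Q : Polynomial (MvPolynomial (Fin 1) K) := MvPolynomial.finSuccEquiv K 1 F with hQdef
  have hQ0 : Q ≠ 0 := by
    intro h
    apply hF
    have := (MvPolynomial.finSuccEquiv K 1).injective (a₁ := F) (a₂ := 0)
    simp only [map_zero] at this
    exact this h
  set p : K → Polynomial K := fun z => Polynomial.map (MvPolynomial.eval ![z]) Q with hpdef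
  have heval : ∀ y z : K, MvPolynomial.eval ![y, z] F = Polynomial.eval y (p z) := by
    intro y z
    exact MvPolynomial.eval_eq_eval_mv_eval' ![z] y F
  have hdQ : Q.natDegree ≤ d := by
    rw [hQdef, MvPolynomial.natDegree_finSuccEquiv]
    exact le_trans (MvPolynomial.degreeOf_le_totalDegree F 0) hdeg
  have hpdeg : ∀ z, (p z).natDegree ≤ d :=
    fun z => le_trans (Polynomial.natDegree_map_le) hdQ
  -- inner bound for nonzero fiber polynomials
  have hinner : ∀ z, p z ≠ 0 →
      (B.filter fun y => Polynomial.eval y (p z) = 0).card ≤ d := by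
    intro z hz
    calc (B.filter fun y => Polynomial.eval y (p z) = 0).card
        ≤ (p z).roots.toFinset.card := by
          apply Finset.card_le_card
          intro y hy
          rw [Finset.mem_filter] at hy
          rw [Multiset.mem_toFinset, Polynomial.mem_roots hz]
          exact hy.2
      _ ≤ Multiset.card (p z).roots := Multiset.toFinset_card_le _
      _ ≤ (p z).natDegree := Polynomial.card_roots' _
      _ ≤ d := hpdeg z
  -- the leading coefficient of Q, a nonzero polynomial in one variable
  set g : MvPolynomial (Fin 1) K := Q.coeff Q.natDegree with hgdef
  have hg : g ≠ 0 := Polynomial.leadingCoeff_ne_zero.mpr hQ0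
  have hgtot : g.totalDegree ≤ d := by
    have := MvPolynomial.totalDegree_coeff_finSuccEquiv_add_le F Q.natDegree
      (by rw [← hQdef, ← hgdef]; exact hg)
    rw [← hQdef, ← hgdef] at this
    omega
  -- convert g to a one-variable polynomial q
  set q : Polynomial K :=
    Polynomial.map (MvPolynomial.eval ![]) (MvPolynomial.finSuccEquiv K 0 g) with hqdef
  have heval1 : ∀ z : K, MvPolynomial.eval ![z] g = Polynomial.eval z q :=
    fun z => MvPolynomial.eval_eq_eval_mv_eval' ![] z g
  have hinj : Function.Injective (MvPolynomial.eval (![] : Fin 0 → K)) := by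
    intro a b hab
    obtain ⟨a, rfl⟩ := MvPolynomial.C_surjective (Fin 0) a
    obtain ⟨b, rfl⟩ := MvPolynomial.C_surjective (Fin 0) b
    simpa using hab
  have hq0 : q ≠ 0 := by
    rw [hqdef]
    rw [Polynomial.map_ne_zero_iff hinj]
    intro h
    apply hg
    have := (MvPolynomial.finSuccEquiv K 0).injective (a₁ := g) (a₂ := 0)
    simp only [map_zero] at this
    exact this h
  have hqdeg : q.natDegree ≤ d := by
    refine le_trans (Polynomial.natDegree_map_le) ?_
    rw [MvPolynomial.natDegree_finSuccEquiv]
    exact le_trans (MvPolynomial.degreeOf_le_totalDegree g 0) hgtot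
  -- the set of bad columns has cardinality at most d
  have hbad : (C.filter fun z => p z = 0).card ≤ d := by
    calc (C.filter fun z => p z = 0).card
        ≤ q.roots.toFinset.card := by
          apply Finset.card_le_card
          intro z hz
          rw [Finset.mem_filter] at hz
          rw [Multiset.mem_toFinset, Polynomial.mem_roots hq0]
          have : (p z).coeff Q.natDegree = 0 := by rw [hz.2]; simp
          rw [hpdef] at this
          simp only [Polynomial.coeff_map] at this
          rw [← hgdef] at this
          rw [heval1 z] at this
          exact this
      _ ≤ Multiset.card q.roots := Multiset.toFinset_card_le _
      _ ≤ q.natDegree := Polynomial.card_roots' _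
      _ ≤ d := hqdeg
  -- fiberwise counting
  have hsum : ((B ×ˢ C).filter fun pr => MvPolynomial.eval ![pr.1, pr.2] F = 0).card
      = ∑ z ∈ C, (B.filter fun y => Polynomial.eval y (p z) = 0).card := by
    rw [Finset.card_eq_sum_card_fiberwise (f := Prod.snd) (t := C)
      (fun x hx => (Finset.mem_product.1 (Finset.mem_filter.1 hx).1).2)]
    refine Finset.sum_congr rfl fun z hz => ?_
    apply Finset.card_bij (fun x _ => x.1)
    · intro x hx
      simp only [Finset.mem_filter, Finset.mem_product] at hx
      rw [Finset.mem_filter]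
      obtain ⟨⟨⟨hxB, _⟩, hx0⟩, hxz⟩ := hx
      refine ⟨hxB, ?_⟩
      rw [← heval, ← hxz]
      exact hx0
    · intro a ha b hb hab
      simp only [Finset.mem_filter] at ha hb
      ext
      · exact hab
      · rw [ha.2, hb.2]
    · intro y hy
      rw [Finset.mem_filter] at hy
      refine ⟨(y, z), ?_, rfl⟩
      simp only [Finset.mem_filter, Finset.mem_product]
      exact ⟨⟨⟨hy.1, hz⟩, by rw [heval]; exact hy.2⟩, trivial⟩
  -- combine
  set a := (C.filter fun z => p z = 0).card with hadef
  set b := (C.filter fun z => ¬ p z = 0).card with hbdef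
  have hab : a + b = m := by
    rw [hadef, hbdef, Finset.card_filter_add_card_filter_not, hC]
  have hbound : ((B ×ˢ C).filter fun pr => MvPolynomial.eval ![pr.1, pr.2] F = 0).card
      ≤ a * m + b * d := by
    rw [hsum, ← Finset.sum_filter_add_sum_filter_not C (fun z => p z = 0)]
    gcongr
    · calc ∑ z ∈ C.filter fun z => p z = 0,
            (B.filter fun y => Polynomial.eval y (p z) = 0).card
          ≤ ∑ _z ∈ C.filter fun z => p z = 0, m := by
            apply Finset.sum_le_sum
            intro z _
            exact le_trans (Finset.card_filter_le _ _) (le_of_eq hB)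
        _ = a * m := by rw [Finset.sum_const, smul_eq_mul]
    · calc ∑ z ∈ C.filter fun z => ¬ p z = 0,
            (B.filter fun y => Polynomial.eval y (p z) = 0).card
          ≤ ∑ _z ∈ C.filter fun z => ¬ p z = 0, d := by
            apply Finset.sum_le_sum
            intro z hz
            exact hinner z (Finset.mem_filter.1 hz).2
        _ = b * d := by rw [Finset.sum_const, smul_eq_mul]
  have hfinal : 2 * d * m ≤ a * m + b * d := le_trans hzeros hbound
  -- derive a contradiction by arithmetic
  rcases le_or_gt m d with hmd | hmd
  · nlinarith [Nat.mul_le_mul_right m hbad, Nat.mul_le_mul_right d (Nat.le.intro hab)]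
  · nlinarith [Nat.mul_le_mul_right m hbad]
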